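/- Let a₀ ∈ {0,…,9}, and for Y = 10^k define F_Y(θ) = (1/9^k)·|Σ_{n<Y, n has no digit a₀} e(nθ)|. Then for any powers of ten U = 10^u and V = 10^v, F_{UV}(θ) = F_U(θ)·F_V(Uθ) for all real θ. -/

import Mathlib

/-- `e(x) = exp(2πix)`. -/
noncomputable def e (x : ℝ) : ℂ := Complex.exp (2 * Real.pi * Complex.I * x)

/-- The normalized Fourier transform `F_{10^k}(θ)` of the integers below `10^k`
all of whose `k` base-10 digits (leading zeros allowed) differ from `a₀`. -/
noncomputable def F (a₀ k : ℕ) (θ : ℝ) : ℝ :=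
  (1 / 9^k : ℝ) *
    ‖(∑ n ∈ (Finset.range (10^k)).filter (fun n => ∀ i < k, n / 10^i % 10 ≠ a₀),
      e ((n : ℝ) * θ))‖

lemma e_add (x y : ℝ) : e (x + y) = e x * e y := by
  rw [e, e, e, ← Complex.exp_add]
  congr 1
  push_cast
  ring

lemma digit_lo (a b u i : ℕ) (hi : i < u) :
    (a + 10 ^ u * b) / 10 ^ i % 10 = a / 10 ^ i % 10 := by
  have h1 : 10 ^ u * b = (10 ^ (u - i - 1) * b * 10) * 10 ^ i := by
    have h : 10 ^ u = 10 ^ (u - i - 1) * 10 * 10 ^ i := by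
      rw [← pow_succ, ← pow_add]; congr 1; omega
    rw [h]; ring
  rw [h1, Nat.add_mul_div_right _ _ (by positivity), Nat.add_mul_mod_self_right]

lemma digit_hi (a b u j : ℕ) (ha : a < 10 ^ u) :
    (a + 10 ^ u * b) / 10 ^ (u + j) % 10 = b / 10 ^ j % 10 := by
  rw [pow_add, ← Nat.div_div_eq_div_mul, Nat.add_mul_div_left _ _ (by positivity),
    Nat.div_eq_of_lt ha, Nat.zero_add]

theorem stmt_2 (a₀ : ℕ) (ha : a₀ ≤ 9) (u v : ℕ) (θ : ℝ) :
    F a₀ (u + v) θ = F a₀ u θ * F a₀ v ((10^u : ℝ) * θ) := by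
  have key : (∑ n ∈ (Finset.range (10^(u+v))).filter
        (fun n => ∀ i < u + v, n / 10^i % 10 ≠ a₀), e ((n : ℝ) * θ)) =
      (∑ n ∈ (Finset.range (10^u)).filter (fun n => ∀ i < u, n / 10^i % 10 ≠ a₀),
        e ((n : ℝ) * θ)) *
      (∑ n ∈ (Finset.range (10^v)).filter (fun n => ∀ i < v, n / 10^i % 10 ≠ a₀),
        e ((n : ℝ) * ((10^u : ℝ) * θ))) := by
    rw [Finset.sum_mul_sum]
    rw [← Finset.sum_product']
    refine Finset.sum_nbij' (fun n => (n % 10 ^ u, n / 10 ^ u))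
      (fun p => p.1 + 10 ^ u * p.2) ?_ ?_ ?_ ?_ ?_
    · intro n hn
      simp only [Finset.mem_filter, Finset.mem_range] at hn
      obtain ⟨hlt, hdig⟩ := hn
      have hmod : n % 10 ^ u < 10 ^ u := Nat.mod_lt _ (by positivity)
      have hdecomp : n % 10 ^ u + 10 ^ u * (n / 10 ^ u) = n := Nat.mod_add_div _ _
      simp only [Finset.mem_product, Finset.mem_filter, Finset.mem_range]
      refine ⟨⟨hmod, fun i hi => ?_⟩, Nat.div_lt_of_lt_mul (by rw [← pow_add]; exact hlt),
        fun j hj => ?_⟩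
      · rw [← digit_lo (n % 10 ^ u) (n / 10 ^ u) u i hi, hdecomp]
        exact hdig i (by omega)
      · rw [← digit_hi (n % 10 ^ u) (n / 10 ^ u) u j hmod, hdecomp]
        exact hdig (u + j) (by omega)
    · intro p hp
      simp only [Finset.mem_product, Finset.mem_filter, Finset.mem_range] at hp
      obtain ⟨⟨h1, hd1⟩, h2, hd2⟩ := hp
      simp only [Finset.mem_filter, Finset.mem_range]
      constructor
      · calc p.1 + 10 ^ u * p.2 < 10 ^ u + 10 ^ u * p.2 := by omega
          _ = 10 ^ u * (p.2 + 1) := by ring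
          _ ≤ 10 ^ u * 10 ^ v := by
              exact Nat.mul_le_mul_left _ (by omega)
          _ = 10 ^ (u + v) := (pow_add 10 u v).symm
      · intro i hi
        rcases lt_or_ge i u with h | h
        · rw [digit_lo _ _ _ _ h]; exact hd1 i h
        · obtain ⟨j, rfl⟩ : ∃ j, i = u + j := ⟨i - u, by omega⟩
          rw [digit_hi _ _ _ _ h1]; exact hd2 j (by omega)
    · intro n hn
      exact Nat.mod_add_div _ _
    · intro p hp
      simp only [Finset.mem_product, Finset.mem_filter, Finset.mem_range] at hp
      obtain ⟨⟨h1, _⟩, _, _⟩ := hp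
      have e1 : (p.1 + 10 ^ u * p.2) % 10 ^ u = p.1 := by
        rw [Nat.add_mul_mod_self_left, Nat.mod_eq_of_lt h1]
      have e2 : (p.1 + 10 ^ u * p.2) / 10 ^ u = p.2 := by
        rw [Nat.add_mul_div_left _ _ (by positivity), Nat.div_eq_of_lt h1, Nat.zero_add]
      show ((p.1 + 10 ^ u * p.2) % 10 ^ u, (p.1 + 10 ^ u * p.2) / 10 ^ u) = p
      rw [e1, e2]
    · intro n hn
      have hdecomp : (n : ℝ) = (n % 10 ^ u : ℕ) + (10 ^ u : ℕ) * (n / 10 ^ u : ℕ) := by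
        exact_mod_cast (Nat.mod_add_div n (10 ^ u)).symm
      rw [hdecomp, show ((n % 10 ^ u : ℕ) + ((10 ^ u : ℕ) : ℝ) * (n / 10 ^ u : ℕ)) * θ
          = (n % 10 ^ u : ℕ) * θ + (n / 10 ^ u : ℕ) * ((10 ^ u : ℝ) * θ) by push_cast; ring,
        e_add]
  unfold F
  rw [key, norm_mul]
  push_cast
  rw [pow_add]
  ring
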